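/- If f : R → R is additive (f(a+b) = f(a)+f(b) for all a,b) and f(π) = 0, then the Dehn invariant D_f(T3) = Σ_{edges e} ℓ(e)·f(α_e) of the orthoscheme T3 = conv{(0,0,0), (2,2,-1), (3,0,-3), (5,-1,-1)} is zero. -/

import Mathlib

open Real MeasureTheory
set_option maxHeartbeats 1000000
noncomputable section
abbrev E3 := EuclideanSpace ℝ (Fin 3)
/-- The point (a,b,c) in Euclidean 3-space. -/
def pt (a b c : ℝ) : E3 := WithLp.toLp 2 ![a, b, c]
/-- Dihedral angle of the tetrahedron `conv {a,b,c,d}` at the edge `[a,b]`: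
the angle between the components of `c - a` and `d - a` orthogonal to `b - a`. -/
def dihedral (a b c d : E3) : ℝ :=
  InnerProductGeometry.angle
    ((c - a) - ((inner ℝ (c - a) (b - a) : ℝ) / (inner ℝ (b - a) (b - a) : ℝ)) • (b - a))
    ((d - a) - ((inner ℝ (d - a) (b - a) : ℝ) / (inner ℝ (b - a) (b - a) : ℝ)) • (b - a))
/-- The Dehn invariant `D_f` of the tetrahedron `conv {a,b,c,d}`:
sum over the six edges of (length) ⬝ f(dihedral angle). -/
def dehnTetra (f : ℝ → ℝ) (a b c d : E3) : ℝ :=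
  dist a b * f (dihedral a b c d) + dist a c * f (dihedral a c b d) +
  dist a d * f (dihedral a d b c) + dist b c * f (dihedral b c a d) +
  dist b d * f (dihedral b d a c) + dist c d * f (dihedral c d a b)

lemma inner_pt (a b c x y z : ℝ) : (inner ℝ (pt a b c) (pt x y z) : ℝ) = a*x + b*y + c*z := by
  simp [pt, PiLp.inner_apply, Fin.sum_univ_three]
  ring

lemma sub_pt (a b c x y z : ℝ) : pt a b c - pt x y z = pt (a-x) (b-y) (c-z) := by
  ext i; fin_cases i <;> simp [pt]

lemma smul_pt (r a b c : ℝ) : r • pt a b c = pt (r*a) (r*b) (r*c) := by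
  ext i; fin_cases i <;> simp [pt]

lemma norm_pt (a b c : ℝ) : ‖pt a b c‖ = Real.sqrt (a^2+b^2+c^2) := by
  rw [EuclideanSpace.norm_eq]
  congr 1
  simp [pt, Fin.sum_univ_three, sq_abs]

lemma angle_pt_eq (a b c x y z r : ℝ) (h0 : 0 ≤ r) (h1 : r ≤ π)
    (h : Real.cos r = (a*x+b*y+c*z) / (Real.sqrt (a^2+b^2+c^2) * Real.sqrt (x^2+y^2+z^2))) :
    InnerProductGeometry.angle (pt a b c) (pt x y z) = r := by
  rw [InnerProductGeometry.angle, inner_pt, norm_pt, norm_pt, ← h, Real.arccos_cos h0 h1]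

lemma angle_pt_right (a b c x y z : ℝ) (h : a*x+b*y+c*z = 0) :
    InnerProductGeometry.angle (pt a b c) (pt x y z) = π/2 := by
  apply (InnerProductGeometry.inner_eq_zero_iff_angle_eq_pi_div_two _ _).mp
  rw [inner_pt, h]

theorem dehn_T3_eq_zero (f : ℝ → ℝ) (hadd : ∀ a b : ℝ, f (a + b) = f a + f b)
    (hpi : f Real.pi = 0) :
    dehnTetra f (pt 0 0 0) (pt 2 2 (-1)) (pt 3 0 (-3)) (pt 5 (-1) (-1)) = 0 := by
  have pi_pos := Real.pi_pos
  have s2 : Real.sqrt 2 * Real.sqrt 2 = 2 := Real.mul_self_sqrt (by norm_num)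
  have s2pos : (0:ℝ) < Real.sqrt 2 := Real.sqrt_pos.mpr (by norm_num)
  -- f values
  have f2 : f (π/2) = 0 := by
    have := hadd (π/2) (π/2); rw [show π/2 + π/2 = π by ring] at this; linarith
  have f3 : f (π/3) = 0 := by
    have h1 := hadd (π/3) (π/3)
    have h2 := hadd (π/3 + π/3) (π/3)
    rw [show π/3 + π/3 + π/3 = π by ring] at h2; linarith
  have f4 : f (π/4) = 0 := by
    have h1 := hadd (π/4) (π/4)
    rw [show π/4 + π/4 = π/2 by ring] at h1; linarith
  -- dihedral angles
  have hab : dihedral (pt 0 0 0) (pt 2 2 (-1)) (pt 3 0 (-3)) (pt 5 (-1) (-1)) = π/4 := by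
    simp only [dihedral, sub_pt, inner_pt, smul_pt]
    norm_num [sub_pt, smul_pt]
    apply angle_pt_eq _ _ _ _ _ _ _ (by positivity) (by linarith)
    rw [Real.cos_pi_div_four]
    rw [show (1:ℝ)^2 + (-2)^2 + (-2)^2 = 9 by norm_num,
        show (3:ℝ)^2 + (-3)^2 + 0^2 = 18 by norm_num,
        show (18:ℝ) = 9 * 2 by norm_num, Real.sqrt_mul (by norm_num),
        show Real.sqrt 9 = 3 by rw [show (9:ℝ) = 3^2 by norm_num]; exact Real.sqrt_sq (by norm_num)]
    field_simp
    nlinarith [s2]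
  have hac : dihedral (pt 0 0 0) (pt 3 0 (-3)) (pt 2 2 (-1)) (pt 5 (-1) (-1)) = π/2 := by
    simp only [dihedral, sub_pt, inner_pt, smul_pt]
    norm_num [sub_pt, smul_pt]
    apply angle_pt_right
    norm_num
  have had : dihedral (pt 0 0 0) (pt 5 (-1) (-1)) (pt 2 2 (-1)) (pt 3 0 (-3)) = π/3 := by
    simp only [dihedral, sub_pt, inner_pt, smul_pt]
    norm_num [sub_pt, smul_pt]
    apply angle_pt_eq _ _ _ _ _ _ _ (by positivity) (by linarith)
    rw [Real.cos_pi_div_three]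
    rw [show ((1/3:ℝ)^2 + (7/3)^2 + (-(2/3))^2) = 6 by norm_num,
        show ((-(1/3):ℝ)^2 + (2/3)^2 + (-(7/3))^2) = 6 by norm_num,
        Real.mul_self_sqrt (by norm_num : (0:ℝ) ≤ 6)]
    norm_num
  have hbc : dihedral (pt 2 2 (-1)) (pt 3 0 (-3)) (pt 0 0 0) (pt 5 (-1) (-1)) = π/2 := by
    simp only [dihedral, sub_pt, inner_pt, smul_pt]
    norm_num [sub_pt, smul_pt]
    apply angle_pt_right
    norm_num
  have hbd : dihedral (pt 2 2 (-1)) (pt 5 (-1) (-1)) (pt 0 0 0) (pt 3 0 (-3)) = π/2 := by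
    simp only [dihedral, sub_pt, inner_pt, smul_pt]
    norm_num [sub_pt, smul_pt]
    apply angle_pt_right
    norm_num
  have hcd : dihedral (pt 3 0 (-3)) (pt 5 (-1) (-1)) (pt 0 0 0) (pt 2 2 (-1)) = π/4 := by
    simp only [dihedral, sub_pt, inner_pt, smul_pt]
    norm_num [sub_pt, smul_pt]
    apply angle_pt_eq _ _ _ _ _ _ _ (by positivity) (by linarith)
    rw [Real.cos_pi_div_four]
    rw [show ((-3:ℝ))^2 + 0^2 + 3^2 = 18 by norm_num,
        show ((-1:ℝ))^2 + 2^2 + 2^2 = 9 by norm_num,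
        show (18:ℝ) = 9 * 2 by norm_num, Real.sqrt_mul (by norm_num),
        show Real.sqrt 9 = 3 by rw [show (9:ℝ) = 3^2 by norm_num]; exact Real.sqrt_sq (by norm_num)]
    field_simp
    nlinarith [s2]
  rw [dehnTetra, hab, hac, had, hbc, hbd, hcd, f2, f3, f4]
  ring
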